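/- arXiv:1409.6527 — 3 statements merged into one kernel-verified Lean document; each statement's English description precedes it below -/
import Mathlib

section
/- In Z[i], the set T = {x + iy : x > 0, y > 0} has density 1/8 with respect to the Z-basis E' = {1, −1+i}: indeed |O[B,E'] ∩ T| = (B−1)(B−2)/2 for all B ≥ 2. In particular, the density of a subset of the ring of integers can depend on the chosen Z-basis. -/
open Filter Topology

def gaussianBox' (B : ℤ) : Set GaussianInt :=
  {z : GaussianInt | (-B ≤ z.re + z.im ∧ z.re + z.im < B) ∧ (-B ≤ z.im ∧ z.im < B)}

def firstQuadrantT : Set GaussianInt := {z : GaussianInt | 0 < z.re ∧ 0 < z.im}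

private def triF (m : ℕ) : Finset (ℕ × ℕ) :=
  (Finset.range m ×ˢ Finset.range m).filter fun p => p.1 + p.2 < m

private lemma triF_card (m : ℕ) : (triF m).card * 2 = m * (m + 1) := by
  induction m with
  | zero => simp [triF]
  | succ n ih =>
    have hstep : triF (n + 1) = triF n ∪ Finset.HasAntidiagonal.antidiagonal n := by
      ext p
      simp only [triF, Finset.mem_filter, Finset.mem_product, Finset.mem_range,
        Finset.mem_union, Finset.HasAntidiagonal.mem_antidiagonal]
      omega
    have hdisj : Disjoint (triF n) (Finset.HasAntidiagonal.antidiagonal n) := by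
      rw [Finset.disjoint_left]
      intro p hp hq
      simp only [triF, Finset.mem_filter, Finset.mem_product, Finset.mem_range,
        Finset.HasAntidiagonal.mem_antidiagonal] at hp hq
      omega
    rw [hstep, Finset.card_union_of_disjoint hdisj, Finset.Nat.card_antidiagonal,
      add_mul, ih]
    ring

private lemma mk_inj : Function.Injective
    (fun p : ℕ × ℕ => (⟨(p.1 : ℤ) + 1, (p.2 : ℤ) + 1⟩ : GaussianInt)) := by
  rintro ⟨a, b⟩ ⟨c, d⟩ h
  simp only [Zsqrtd.ext_iff] at h
  have : a = c ∧ b = d := by omega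
  simp [this.1, this.2]

private lemma set_eq (B : ℕ) (hB : 2 ≤ B) :
    (gaussianBox' (B : ℤ) ∩ firstQuadrantT : Set GaussianInt)
      = ↑((triF (B - 2)).image fun p : ℕ × ℕ =>
          (⟨(p.1 : ℤ) + 1, (p.2 : ℤ) + 1⟩ : GaussianInt)) := by
  ext z
  simp only [Set.mem_inter_iff, gaussianBox', firstQuadrantT, Set.mem_setOf_eq,
    Finset.coe_image, Set.mem_image, Finset.mem_coe, triF, Finset.mem_filter,
    Finset.mem_product, Finset.mem_range]
  constructor
  · rintro ⟨⟨⟨h1, h2⟩, h3, h4⟩, h5, h6⟩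
    refine ⟨((z.re - 1).toNat, (z.im - 1).toNat), ⟨⟨?_, ?_⟩, ?_⟩, ?_⟩
    · omega
    · omega
    · omega
    · have : z = ⟨z.re, z.im⟩ := rfl
      rw [this]
      simp only [Zsqrtd.ext_iff]
      constructor <;> omega
  · rintro ⟨⟨a, b⟩, ⟨⟨ha, hb⟩, hab⟩, rfl⟩
    refine ⟨⟨⟨?_, ?_⟩, ?_, ?_⟩, ?_, ?_⟩ <;>
      simp only [] <;> omega

theorem gaussian_first_quadrant_density_one_eighth_other_basis :
    (∀ B : ℕ, 2 ≤ B →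
      Nat.card (gaussianBox' (B : ℤ) ∩ firstQuadrantT : Set GaussianInt)
        = (B - 1) * (B - 2) / 2) ∧
    Tendsto
      (fun B : ℕ =>
        (Nat.card (gaussianBox' (B : ℤ) ∩ firstQuadrantT : Set GaussianInt) : ℝ) / (2 * B) ^ 2)
      atTop (𝓝 (1 / 8)) := by
  have key : ∀ B : ℕ, 2 ≤ B →
      Nat.card (gaussianBox' (B : ℤ) ∩ firstQuadrantT : Set GaussianInt)
        = (B - 1) * (B - 2) / 2 := by
    intro B hB
    rw [set_eq B hB, Nat.card_coe_set_eq, Set.ncard_coe_finset,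
      Finset.card_image_of_injective _ mk_inj]
    have h := triF_card (B - 2)
    have h2 : (B - 2) * (B - 2 + 1) = (B - 1) * (B - 2) := by
      have : B - 2 + 1 = B - 1 := by omega
      rw [this, Nat.mul_comm]
    rw [h2] at h
    generalize hk : (B - 1) * (B - 2) = k at *
    omega
  refine ⟨key, ?_⟩
  have h1 : Tendsto (fun B : ℕ => 1 / (B : ℝ)) atTop (𝓝 0) :=
    tendsto_one_div_atTop_nhds_zero_nat
  have h2 : Tendsto (fun B : ℕ => 2 / (B : ℝ)) atTop (𝓝 0) := by
    have := h1.const_mul (2 : ℝ)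
    simpa [mul_comm, div_eq_mul_inv, one_div] using this
  have hlim : Tendsto (fun B : ℕ => (1 - 1 / (B : ℝ)) * (1 - 2 / (B : ℝ)) / 8)
      atTop (𝓝 (1 / 8)) := by
    have := (((tendsto_const_nhds (x := (1:ℝ))).sub h1).mul
      ((tendsto_const_nhds (x := (1:ℝ))).sub h2)).div_const (8 : ℝ)
    simpa using this
  refine Tendsto.congr' ?_ hlim
  filter_upwards [eventually_ge_atTop 2] with B hB
  rw [key B hB]
  have hd : (2 : ℕ) ∣ (B - 1) * (B - 2) := by
    have := Nat.even_mul_succ_self (B - 2)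
    have h3 : B - 2 + 1 = B - 1 := by omega
    rw [h3] at this
    exact (Nat.mul_comm _ _ ▸ this).two_dvd
  rw [Nat.cast_div hd (by norm_num : (2 : ℝ) ≠ 0)]
  have hB0 : (B : ℝ) ≠ 0 := by positivity
  push_cast [Nat.cast_sub (by omega : 1 ≤ B), Nat.cast_sub (by omega : 2 ≤ B)]
  have hB0' : (0:ℝ) < (B:ℝ) := by positivity
  field_simp
  ring_nf
end

section
/- Let K be a number field of degree n with ring of integers O, E a Z-basis for O, S a finite set of rational primes, and N = ∏_{p∈S} p. For each p ∈ S let d_1^{(p)},…,d_{λ_p}^{(p)} be the inertia degrees of the primes above p and D_p their sum. Then for every positive integer q, |E_S ∩ O[qN,E]^m| = (2q)^{mn} ∏_{p∈S} ( p^{nm − mD_p} ∏_{j=1}^{λ_p} (p^{d_j^{(p)} m} − 1) ), where E_S is the set of m-tuples in O^m generating an ideal coprime to every p ∈ S. -/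
set_option maxHeartbeats 1000000
set_option synthInstance.maxHeartbeats 400000

open NumberField

/-- `x ∈ 𝒪[B, E]`: all coordinates of `x` with respect to the `ℤ`-basis `E` lie in `[-B, B)`. -/
def memBox {K : Type*} [Field K] [NumberField K] {n : ℕ}
    (E : Module.Basis (Fin n) ℤ (𝓞 K)) (B : ℤ) (x : 𝓞 K) : Prop :=
  ∀ i : Fin n, -B ≤ E.repr x i ∧ E.repr x i < B

section Auxiliary

theorem aux_ico_modeq_card (q NN : ℕ) (hN : 0 < NN) (c : ℤ) :
    ((Finset.Ico (-(q*NN : ℤ)) (q*NN)).filter (fun t => t ≡ c [ZMOD (NN:ℤ)])).card = 2*q := by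
  have hr : (0:ℤ) < (NN:ℤ) := by exact_mod_cast hN
  have h := Int.Ico_filter_modEq_card (-(q*NN : ℤ)) (q*NN) hr c
  have hNQ : ((NN:ℤ):ℚ) ≠ 0 := by exact_mod_cast hN.ne'
  have e1 : (((q*NN : ℤ):ℚ) - c) / ((NN:ℤ):ℚ) = (-c)/((NN:ℤ):ℚ) + (q:ℤ) := by
    field_simp; push_cast; ring
  have e2 : (((-(q*NN : ℤ) : ℤ):ℚ) - c) / ((NN:ℤ):ℚ) = (-c)/((NN:ℤ):ℚ) + ((-q : ℤ):ℚ) := by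
    field_simp; push_cast; ring
  rw [e1, e2, Int.ceil_add_intCast, Int.ceil_add_intCast] at h
  have : (⌈(-c)/((NN:ℤ):ℚ)⌉ + (q:ℤ)) - (⌈(-c)/((NN:ℤ):ℚ)⌉ + (-q:ℤ)) = 2*q := by ring
  rw [this] at h
  omega

variable {K : Type*} [Field K] [NumberField K] {n : ℕ}

theorem aux_mk_eq_mk_iff_dvd (E : Module.Basis (Fin n) ℤ (𝓞 K)) (NN : ℕ) (a b : 𝓞 K) :
    Ideal.Quotient.mk (Ideal.span {(NN : 𝓞 K)}) a = Ideal.Quotient.mk _ b ↔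
    ∀ i, (NN:ℤ) ∣ (E.repr a i - E.repr b i) := by
  rw [Ideal.Quotient.eq, Ideal.mem_span_singleton]
  have key : ∀ c : 𝓞 K, (NN : 𝓞 K) * c = (NN:ℤ) • c := by
    intro c; rw [zsmul_eq_mul]; push_cast; ring
  constructor
  · rintro ⟨c, hc⟩ i
    refine ⟨E.repr c i, ?_⟩
    have h2 : a - b = (NN:ℤ) • c := by rw [hc, key]
    calc E.repr a i - E.repr b i = E.repr (a-b) i := by rw [map_sub]; rfl
    _ = (NN:ℤ) * E.repr c i := by rw [h2, map_smul]; rfl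
  · intro hdvd
    refine ⟨E.repr.symm (Finsupp.equivFunOnFinite.symm
        (fun i => (E.repr a i - E.repr b i) / (NN:ℤ))), ?_⟩
    apply E.repr.injective
    rw [key, map_smul]
    ext i
    rw [map_sub]
    simp only [Finsupp.coe_sub, Pi.sub_apply, Finsupp.coe_smul, Pi.smul_apply,
      Module.Basis.repr_symm_apply, Module.Basis.repr_linearCombination]
    rw [Finsupp.coe_equivFunOnFinite_symm]
    rw [smul_eq_mul, Int.mul_ediv_cancel' (hdvd i)]

theorem aux_box_fiber_card (E : Module.Basis (Fin n) ℤ (𝓞 K)) (q NN : ℕ) (hN : 0 < NN)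
    (x : 𝓞 K ⧸ Ideal.span {(NN : 𝓞 K)}) :
    Nat.card {a : 𝓞 K // memBox E ((q:ℤ) * (NN:ℤ)) a ∧
      Ideal.Quotient.mk (Ideal.span {(NN : 𝓞 K)}) a = x} = (2*q)^n := by
  obtain ⟨a₀, rfl⟩ := Ideal.Quotient.mk_surjective x
  set c : Fin n → ℤ := fun i => E.repr a₀ i with hc
  have key : ∀ a : 𝓞 K, (memBox E ((q:ℤ) * (NN:ℤ)) a ∧
      Ideal.Quotient.mk (Ideal.span {(NN : 𝓞 K)}) a = Ideal.Quotient.mk _ a₀) ↔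
      (∀ i, E.repr a i ∈ (Finset.Ico (-(q*NN : ℤ)) (q*NN)).filter
        (fun t => t ≡ c i [ZMOD (NN:ℤ)])) := by
    intro a
    rw [aux_mk_eq_mk_iff_dvd E NN a a₀]
    constructor
    · rintro ⟨hbox, hdvd⟩ i
      simp only [Finset.mem_filter, Finset.mem_Ico]
      refine ⟨⟨by simpa using (hbox i).1, (hbox i).2⟩, ?_⟩
      have h2 : c i ≡ E.repr a i [ZMOD (NN:ℤ)] := (Int.modEq_iff_dvd).mpr (hdvd i)
      exact h2.symm
    · intro h
      constructor
      · intro i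
        have := h i
        simp only [Finset.mem_filter, Finset.mem_Ico] at this
        exact ⟨by simpa using this.1.1, this.1.2⟩
      · intro i
        have := h i
        simp only [Finset.mem_filter, Finset.mem_Ico] at this
        have h3 := this.2.symm.dvd
        simpa using h3
  have e : {a : 𝓞 K // memBox E ((q:ℤ) * (NN:ℤ)) a ∧
      Ideal.Quotient.mk (Ideal.span {(NN : 𝓞 K)}) a = Ideal.Quotient.mk _ a₀} ≃
      (∀ i : Fin n, {t : ℤ // t ∈ (Finset.Ico (-(q*NN : ℤ)) (q*NN)).filter
        (fun t => t ≡ c i [ZMOD (NN:ℤ)])}) := by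
    refine Equiv.trans (Equiv.subtypeEquiv
      (E.repr.toEquiv.trans Finsupp.equivFunOnFinite) (fun a => ?_)) Equiv.subtypePiEquivPi
    exact key a
  rw [Nat.card_congr e, Nat.card_pi]
  have key2 : ∀ i : Fin n, Nat.card {t : ℤ // t ∈ (Finset.Ico (-(q*NN : ℤ)) (q*NN)).filter
      (fun t => t ≡ c i [ZMOD (NN:ℤ)])} = 2*q := by
    intro i
    rw [Nat.card_eq_finsetCard, aux_ico_modeq_card q NN hN]
  calc ∏ i : Fin n, Nat.card {t : ℤ // t ∈ (Finset.Ico (-(q*NN : ℤ)) (q*NN)).filter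
        (fun t => t ≡ c i [ZMOD (NN:ℤ)])}
      = ∏ _i : Fin n, 2*q := Finset.prod_congr rfl (fun i _ => key2 i)
    _ = (2*q)^n := by simp

theorem aux_card_cond_of_uniform_fibers {α β : Type*} [Finite β] (f : α → β) (Box : α → Prop)
    (c : ℕ) (hc : 0 < c) (hfib : ∀ b : β, Nat.card {a : α // Box a ∧ f a = b} = c)
    (Q : β → Prop) :
    Nat.card {a : α // Box a ∧ Q (f a)} = c * Nat.card {b : β // Q b} := by
  classical
  have hfin : ∀ b : β, Finite {a : α // Box a ∧ f a = b} := fun b =>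
    (Nat.card_pos_iff.mp (hfib b ▸ hc)).2
  let e : {a : α // Box a ∧ Q (f a)} ≃ Σ b : {b : β // Q b}, {a : α // Box a ∧ f a = b.1} :=
  { toFun := fun a => ⟨⟨f a.1, a.2.2⟩, ⟨a.1, a.2.1, rfl⟩⟩
    invFun := fun x => ⟨x.2.1, x.2.2.1, by rw [x.2.2.2]; exact x.1.2⟩
    left_inv := fun a => rfl
    right_inv := fun x => by
      rcases x with ⟨⟨b, hb⟩, ⟨a, ha, hfa⟩⟩
      simp only at hfa
      subst hfa
      rfl }
  rw [Nat.card_congr e]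
  haveI : Fintype {b : β // Q b} := Fintype.ofFinite _
  haveI : ∀ b : {b : β // Q b}, Fintype {a : α // Box a ∧ f a = b.1} :=
    fun b => Fintype.ofFinite _
  rw [Nat.card_eq_fintype_card, Fintype.card_sigma]
  calc ∑ b : {b : β // Q b}, Fintype.card {a : α // Box a ∧ f a = b.1}
      = ∑ _b : {b : β // Q b}, c := Finset.sum_congr rfl (fun b _ => by
        rw [← Nat.card_eq_fintype_card, hfib b.1])
    _ = c * Nat.card {b : β // Q b} := by
        rw [Finset.sum_const, Finset.card_univ, ← Nat.card_eq_fintype_card]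
        ring

theorem aux_sup_eq_top_iff_primes (m : ℕ) (z : Fin m → 𝓞 K) (p : ℕ) :
    Ideal.span (Set.range z) ⊔ Ideal.span {(p : 𝓞 K)} = ⊤ ↔
    ∀ 𝔭 : Ideal (𝓞 K), 𝔭.IsPrime → (p : 𝓞 K) ∈ 𝔭 → ∃ j, z j ∉ 𝔭 := by
  constructor
  · intro htop 𝔭 hprime hp
    by_contra h
    push_neg at h
    have h1 : Ideal.span (Set.range z) ≤ 𝔭 := Ideal.span_le.mpr (by
      rintro _ ⟨j, rfl⟩; exact h j)
    have h2 : Ideal.span {(p : 𝓞 K)} ≤ 𝔭 := (Ideal.span_singleton_le_iff_mem _).mpr hp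
    have : (⊤ : Ideal (𝓞 K)) ≤ 𝔭 := htop ▸ sup_le h1 h2
    exact hprime.ne_top (top_le_iff.mp this)
  · intro h
    by_contra hne
    obtain ⟨𝔪, hmax, hle⟩ := Ideal.exists_le_maximal _ hne
    obtain ⟨j, hj⟩ := h 𝔪 hmax.isPrime
      ((Ideal.span_singleton_le_iff_mem _).mp (le_trans le_sup_right hle))
    exact hj (hle (le_sup_left (a := Ideal.span (Set.range z))
      (Ideal.subset_span ⟨j, rfl⟩)))

theorem aux_span_p_factorization [DecidableEq (Ideal (𝓞 K))]
    (p : ℕ) (hp : p.Prime) (Pp : Finset (Ideal (𝓞 K)))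
    (hPp : ∀ 𝔭 : Ideal (𝓞 K), 𝔭 ∈ Pp ↔ 𝔭.IsPrime ∧ (p : 𝓞 K) ∈ 𝔭) :
    Ideal.span {(p : 𝓞 K)} =
      ∏ 𝔭 ∈ Pp, 𝔭 ^ (UniqueFactorizationMonoid.normalizedFactors
        (Ideal.span {(p : 𝓞 K)})).count 𝔭 := by
  set I : Ideal (𝓞 K) := Ideal.span {(p : 𝓞 K)} with hI
  have hp0 : (p : 𝓞 K) ≠ 0 := Nat.cast_ne_zero.mpr hp.pos.ne'
  have hIbot : I ≠ ⊥ := by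
    rw [hI, Ne, Ideal.span_singleton_eq_bot]; exact hp0
  have htofin : Pp = (UniqueFactorizationMonoid.normalizedFactors I).toFinset := by
    ext 𝔭
    rw [Multiset.mem_toFinset, Ideal.mem_normalizedFactors_iff hIbot, hPp,
      Ideal.span_singleton_le_iff_mem]
  rw [htofin, ← Finset.prod_multiset_count]
  exact (associated_iff_eq.mp
    (UniqueFactorizationMonoid.prod_normalizedFactors hIbot)).symm

theorem aux_absNorm_span_p (E : Module.Basis (Fin n) ℤ (𝓞 K)) (p : ℕ) :
    Ideal.absNorm (Ideal.span {(p : 𝓞 K)}) = p ^ n := by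
  rw [Ideal.absNorm_span_singleton]
  have h0 : ((p : ℤ) : 𝓞 K) = algebraMap ℤ (𝓞 K) (p : ℤ) := by simp
  have hcast : (p : 𝓞 K) = algebraMap ℤ (𝓞 K) (p : ℤ) := by push_cast [h0]; ring
  rw [hcast, Algebra.norm_algebraMap_of_basis E]
  simp [Int.natAbs_pow]

theorem aux_sum_de_eq_n [DecidableEq (Ideal (𝓞 K))]
    (E : Module.Basis (Fin n) ℤ (𝓞 K)) (p : ℕ) (hp : p.Prime)
    (Pp : Finset (Ideal (𝓞 K)))
    (d : Ideal (𝓞 K) → ℕ)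
    (hd : ∀ 𝔭 ∈ Pp, Ideal.absNorm 𝔭 = p ^ d 𝔭)
    (hfact : Ideal.span {(p : 𝓞 K)} =
      ∏ 𝔭 ∈ Pp, 𝔭 ^ (UniqueFactorizationMonoid.normalizedFactors
        (Ideal.span {(p : 𝓞 K)})).count 𝔭) :
    ∑ 𝔭 ∈ Pp, d 𝔭 * (UniqueFactorizationMonoid.normalizedFactors
        (Ideal.span {(p : 𝓞 K)})).count 𝔭 = n := by
  have h1 : Ideal.absNorm (Ideal.span {(p : 𝓞 K)}) = p ^ n := aux_absNorm_span_p E p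
  rw [hfact] at h1
  rw [map_prod] at h1
  have h2 : ∀ 𝔭 ∈ Pp, Ideal.absNorm (𝔭 ^ (UniqueFactorizationMonoid.normalizedFactors
      (Ideal.span {(p : 𝓞 K)})).count 𝔭) =
      p ^ (d 𝔭 * (UniqueFactorizationMonoid.normalizedFactors
        (Ideal.span {(p : 𝓞 K)})).count 𝔭) := by
    intro 𝔭 h𝔭
    rw [map_pow, hd 𝔭 h𝔭, ← pow_mul]
  rw [Finset.prod_congr rfl h2, Finset.prod_pow_eq_pow_sum Pp] at h1
  exact Nat.pow_right_injective hp.two_le h1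

theorem aux_local_count (m : ℕ) (p : ℕ) (hp : p.Prime) (𝔭 : Ideal (𝓞 K))
    (hpmem : (p : 𝓞 K) ∈ 𝔭) (dd e : ℕ) (he : 1 ≤ e)
    (hnorm : Ideal.absNorm 𝔭 = p ^ dd) :
    Nat.card {v : Fin m → 𝓞 K ⧸ 𝔭 ^ e //
      ∃ j, v j ∉ 𝔭.map (Ideal.Quotient.mk (𝔭 ^ e))} =
    p ^ (dd * e * m) - p ^ (dd * (e - 1) * m) := by
  classical
  have hp0 : (p : 𝓞 K) ≠ 0 := Nat.cast_ne_zero.mpr hp.pos.ne'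
  have h𝔭bot : 𝔭 ≠ ⊥ := fun h => hp0 (by rw [h] at hpmem; exact hpmem)
  have hpe : 𝔭 ^ e ≠ ⊥ := by
    rw [← Ideal.zero_eq_bot]
    exact pow_ne_zero _ (by rw [Ideal.zero_eq_bot]; exact h𝔭bot)
  haveI : Fintype (𝓞 K ⧸ 𝔭 ^ e) := @Fintype.ofFinite _ (Ideal.finiteQuotientOfFreeOfNeBot _ hpe)
  set A := 𝓞 K ⧸ 𝔭 ^ e with hA
  set M : Ideal A := 𝔭.map (Ideal.Quotient.mk (𝔭 ^ e)) with hM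
  have cardA : Nat.card A = p ^ (dd * e) := by
    rw [← Submodule.cardQuot_apply, ← Ideal.absNorm_apply, map_pow, hnorm, ← pow_mul]
  have hsup : 𝔭 ^ e ⊔ 𝔭 = 𝔭 := sup_eq_right.mpr (Ideal.pow_le_self (by omega))
  have cardQ : Nat.card (A ⧸ M) = p ^ dd := by
    rw [Nat.card_congr (DoubleQuot.quotQuotEquivQuotSup (𝔭 ^ e) 𝔭).toEquiv, hsup,
      ← Submodule.cardQuot_apply, ← Ideal.absNorm_apply, hnorm]
  have hsplit : Nat.card A = Nat.card M * Nat.card (A ⧸ M) :=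
    Submodule.card_eq_card_quotient_mul_card M
  have cardM : Nat.card M = p ^ (dd * (e - 1)) := by
    have he2 : p ^ (dd*e) = p ^ (dd*(e-1)) * p ^ dd := by
      rw [← pow_add]; congr 1
      have h3 : e - 1 + 1 = e := by omega
      calc dd * e = dd * (e - 1 + 1) := by rw [h3]
        _ = dd * (e-1) + dd := by ring
    have h1 : p ^ (dd * (e-1)) * p ^ dd = Nat.card M * p ^ dd := by
      rw [← he2, ← cardA, hsplit, cardQ]
    exact (Nat.eq_of_mul_eq_mul_right (Nat.pow_pos hp.pos) h1).symm
  have negiff : ∀ v : Fin m → A, (∃ j, v j ∉ M) ↔ ¬ (∀ j, v j ∈ M) := by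
    intro v; push_neg; rfl
  rw [Nat.card_eq_fintype_card]
  calc Fintype.card {v : Fin m → A // ∃ j, v j ∉ M}
      = Fintype.card {v : Fin m → A // ¬ ∀ j, v j ∈ M} := Fintype.card_congr
        (Equiv.subtypeEquivRight negiff)
    _ = Fintype.card (Fin m → A) - Fintype.card {v : Fin m → A // ∀ j, v j ∈ M} :=
        Fintype.card_subtype_compl _
    _ = p ^ (dd * e * m) - p ^ (dd * (e - 1) * m) := by
        congr 1
        · rw [Fintype.card_fun, ← Nat.card_eq_fintype_card, cardA, Fintype.card_fin, ← pow_mul]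
        · rw [Fintype.card_congr (Equiv.subtypePiEquivPi (p := fun _ y => y ∈ M)),
            Fintype.card_pi]
          simp only [← Nat.card_eq_fintype_card]
          rw [Finset.prod_const, cardM, Finset.card_univ, Fintype.card_fin, ← pow_mul]

end Auxiliary

theorem card_coprime_tuples_in_box
    (K : Type*) [Field K] [NumberField K] (n m : ℕ) (hn : Module.finrank ℚ K = n)
    (E : Module.Basis (Fin n) ℤ (𝓞 K)) (S : Finset ℕ) (hS : ∀ p ∈ S, Nat.Prime p)
    (N : ℕ) (hN : N = ∏ p ∈ S, p)
    (P : ℕ → Finset (Ideal (𝓞 K)))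
    (hP : ∀ p ∈ S, ∀ 𝔭 : Ideal (𝓞 K), 𝔭 ∈ P p ↔ 𝔭.IsPrime ∧ (p : 𝓞 K) ∈ 𝔭)
    (d : Ideal (𝓞 K) → ℕ)
    (hd : ∀ p ∈ S, ∀ 𝔭 ∈ P p, Ideal.absNorm 𝔭 = p ^ d 𝔭)
    (D : ℕ → ℕ) (hD : ∀ p ∈ S, D p = ∑ 𝔭 ∈ P p, d 𝔭)
    (q : ℕ) (hq : 0 < q) :
    Nat.card {z : Fin m → 𝓞 K |
        (∀ j, memBox E ((q : ℤ) * (N : ℤ)) (z j)) ∧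
        ∀ p ∈ S, Ideal.span (Set.range z) ⊔ Ideal.span {(p : 𝓞 K)} = ⊤}
      = (2 * q) ^ (m * n) *
          ∏ p ∈ S, (p ^ (n * m - m * D p) * ∏ 𝔭 ∈ P p, (p ^ (d 𝔭 * m) - 1)) := by
  classical
  have hNpos : 0 < N := by
    rw [hN]; exact Finset.prod_pos (fun p hp => (hS p hp).pos)
  set IN : Ideal (𝓞 K) := Ideal.span {(N : 𝓞 K)} with hIN
  have hN0 : (N : 𝓞 K) ≠ 0 := Nat.cast_ne_zero.mpr hNpos.ne'
  have hINbot : IN ≠ ⊥ := by rw [hIN, Ne, Ideal.span_singleton_eq_bot]; exact hN0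
  haveI : Fintype (𝓞 K ⧸ IN) := @Fintype.ofFinite _ (Ideal.finiteQuotientOfFreeOfNeBot _ hINbot)
  have hPfacts : ∀ p ∈ S, ∀ 𝔭 ∈ P p, 𝔭.IsPrime ∧ (p : 𝓞 K) ∈ 𝔭 :=
    fun p hp 𝔭 h𝔭 => (hP p hp 𝔭).mp h𝔭
  have hINle : ∀ p ∈ S, ∀ 𝔭 ∈ P p, IN ≤ 𝔭 := by
    intro p hp 𝔭 h𝔭
    have hpN : p ∣ N := hN ▸ Finset.dvd_prod_of_mem id hp
    obtain ⟨c, hc⟩ := hpN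
    rw [hIN, Ideal.span_singleton_le_iff_mem, hc]
    push_cast
    exact Ideal.mul_mem_right _ _ ((hPfacts p hp 𝔭 h𝔭).2)
  set π := Ideal.Quotient.mk IN with hπ
  set f : (Fin m → 𝓞 K) → (Fin m → 𝓞 K ⧸ IN) := fun z j => π (z j) with hf
  set Box : (Fin m → 𝓞 K) → Prop := fun z => ∀ j, memBox E ((q:ℤ)*(N:ℤ)) (z j) with hBox
  set Q : (Fin m → 𝓞 K ⧸ IN) → Prop :=
    fun w => ∀ p ∈ S, ∀ 𝔭 ∈ P p, ∃ j, w j ∉ 𝔭.map π with hQ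
  -- Step 0 : rewrite the set
  have step0 : Nat.card {z : Fin m → 𝓞 K |
        (∀ j, memBox E ((q : ℤ) * (N : ℤ)) (z j)) ∧
        ∀ p ∈ S, Ideal.span (Set.range z) ⊔ Ideal.span {(p : 𝓞 K)} = ⊤}
      = Nat.card {z : Fin m → 𝓞 K // Box z ∧ Q (f z)} := by
    apply Nat.card_congr
    apply Equiv.subtypeEquivRight
    intro z
    apply and_congr_right
    intro _
    constructor
    · intro h p hp 𝔭 h𝔭
      obtain ⟨j, hj⟩ := (aux_sup_eq_top_iff_primes m z p).mp (h p hp) 𝔭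
        (hPfacts p hp 𝔭 h𝔭).1 (hPfacts p hp 𝔭 h𝔭).2
      exact ⟨j, fun hmem => hj ((Ideal.mem_quotient_iff_mem (hINle p hp 𝔭 h𝔭)).mp hmem)⟩
    · intro h p hp
      apply (aux_sup_eq_top_iff_primes m z p).mpr
      intro 𝔭 hpr hmem
      obtain ⟨j, hj⟩ := h p hp 𝔭 ((hP p hp 𝔭).mpr ⟨hpr, hmem⟩)
      exact ⟨j, fun hz => hj ((Ideal.mem_quotient_iff_mem
        (hINle p hp 𝔭 ((hP p hp 𝔭).mpr ⟨hpr, hmem⟩))).mpr hz)⟩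
  -- Step 1 : box counting with uniform fibers
  have hfib : ∀ w : Fin m → 𝓞 K ⧸ IN,
      Nat.card {z : Fin m → 𝓞 K // Box z ∧ f z = w} = ((2*q)^n)^m := by
    intro w
    have e1 : {z : Fin m → 𝓞 K // Box z ∧ f z = w} ≃
        ∀ j : Fin m, {y : 𝓞 K // memBox E ((q:ℤ)*(N:ℤ)) y ∧ π y = w j} := by
      refine (Equiv.subtypeEquivRight ?_).trans Equiv.subtypePiEquivPi
      intro z
      rw [hBox, hf, funext_iff]
      exact ⟨fun h j => ⟨h.1 j, h.2 j⟩, fun h => ⟨fun j => (h j).1, fun j => (h j).2⟩⟩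
    rw [Nat.card_congr e1, Nat.card_pi]
    calc ∏ j : Fin m, Nat.card {y : 𝓞 K // memBox E ((q:ℤ)*(N:ℤ)) y ∧ π y = w j}
        = ∏ _j : Fin m, (2*q)^n :=
          Finset.prod_congr rfl (fun j _ => aux_box_fiber_card E q N hNpos (w j))
      _ = ((2*q)^n)^m := by simp
  have step1 : Nat.card {z : Fin m → 𝓞 K // Box z ∧ Q (f z)} =
      ((2*q)^n)^m * Nat.card {w : Fin m → 𝓞 K ⧸ IN // Q w} :=
    aux_card_cond_of_uniform_fibers f Box (((2*q)^n)^m)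
      (by positivity) hfib Q
  -- Step 2 : CRT
  set s : Finset ((_ : ℕ) × Ideal (𝓞 K)) := S.sigma (fun p => P p) with hs
  set ee : ((_ : ℕ) × Ideal (𝓞 K)) → ℕ := fun x =>
    (UniqueFactorizationMonoid.normalizedFactors (Ideal.span {((x.1 : ℕ) : 𝓞 K)})).count x.2
    with hee
  have hfactor : ∀ p ∈ S, Ideal.span {(p : 𝓞 K)} =
      ∏ 𝔭 ∈ P p, 𝔭 ^ (UniqueFactorizationMonoid.normalizedFactors
        (Ideal.span {(p : 𝓞 K)})).count 𝔭 :=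
    fun p hp => aux_span_p_factorization p (hS p hp) (P p) (hP p hp)
  have hee1 : ∀ p ∈ S, ∀ 𝔭 ∈ P p, 1 ≤ ee ⟨p, 𝔭⟩ := by
    intro p hp 𝔭 h𝔭
    have hp0 : ((p : ℕ) : 𝓞 K) ≠ 0 := Nat.cast_ne_zero.mpr (hS p hp).pos.ne'
    have hIbot : Ideal.span {((p : ℕ) : 𝓞 K)} ≠ ⊥ := by
      rw [Ne, Ideal.span_singleton_eq_bot]; exact hp0
    apply Multiset.count_pos.mpr
    rw [Ideal.mem_normalizedFactors_iff hIbot]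
    exact ⟨(hPfacts p hp 𝔭 h𝔭).1,
      (Ideal.span_singleton_le_iff_mem _).mpr (hPfacts p hp 𝔭 h𝔭).2⟩
  have hxmem : ∀ x ∈ s, x.1 ∈ S ∧ x.2 ∈ P x.1 := by
    intro x hx; exact Finset.mem_sigma.mp hx
  have hxprime : ∀ x ∈ s, Prime x.2 := by
    intro x hx
    obtain ⟨h1, h2⟩ := hxmem x hx
    have h := hPfacts x.1 h1 x.2 h2
    have hbot : x.2 ≠ ⊥ := fun hb => (Nat.cast_ne_zero.mpr (hS x.1 h1).pos.ne' :
      ((x.1 : ℕ) : 𝓞 K) ≠ 0) (by rw [hb] at h; exact h.2)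
    exact Ideal.prime_of_isPrime hbot h.1
  have hxdistinct : ∀ x ∈ s, ∀ y ∈ s, x ≠ y → x.2 ≠ y.2 := by
    intro x hx y hy hxy heq
    obtain ⟨hx1, hx2⟩ := hxmem x hx
    obtain ⟨hy1, hy2⟩ := hxmem y hy
    by_cases h1 : x.1 = y.1
    · apply hxy
      rcases x with ⟨x1, x2⟩
      rcases y with ⟨y1, y2⟩
      simp only at h1 heq
      subst h1; subst heq; rfl
    · have hco : IsCoprime ((x.1 : ℤ)) ((y.1 : ℤ)) :=
        Nat.isCoprime_iff_coprime.mpr ((Nat.coprime_primes (hS x.1 hx1) (hS y.1 hy1)).mpr h1)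
      have hco2 : IsCoprime ((x.1 : ℕ) : 𝓞 K) ((y.1 : ℕ) : 𝓞 K) := by
        have h2 := hco.map (algebraMap ℤ (𝓞 K))
        simpa using h2
      obtain ⟨a, b, hab⟩ := hco2
      have h1mem : (1 : 𝓞 K) ∈ x.2 := by
        rw [← hab]
        exact add_mem (Ideal.mul_mem_left _ _ (hPfacts x.1 hx1 x.2 hx2).2)
          (Ideal.mul_mem_left _ _ (heq ▸ (hPfacts y.1 hy1 y.2 hy2).2))
      exact (hPfacts x.1 hx1 x.2 hx2).1.ne_top (Ideal.eq_top_of_isUnit_mem _ h1mem isUnit_one)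
  have hprod : ∏ x ∈ s, x.2 ^ ee x = IN := by
    rw [hs, Finset.prod_sigma]
    calc ∏ p ∈ S, ∏ 𝔭 ∈ P p, (⟨p, 𝔭⟩ : (_ : ℕ) × Ideal (𝓞 K)).2 ^ ee ⟨p, 𝔭⟩
        = ∏ p ∈ S, Ideal.span {(p : 𝓞 K)} :=
          Finset.prod_congr rfl (fun p hp => (hfactor p hp).symm)
      _ = IN := by
          rw [Ideal.prod_span_singleton, hIN]
          congr 1
          rw [hN]
          push_cast
          rfl
  set Ψ := IsDedekindDomain.quotientEquivPiOfFinsetProdEq IN (fun x => x.2)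
    (fun x => ee x) hxprime hxdistinct hprod with hΨdef
  have hΨmk : ∀ z : 𝓞 K, Ψ (Ideal.Quotient.mk IN z)
      = fun x : s => Ideal.Quotient.mk (x.val.2 ^ ee x.val) z := fun z => rfl
  have hkey : ∀ (x : ↥s) (w : 𝓞 K ⧸ IN),
      (Ψ w x ∈ (x.val.2).map (Ideal.Quotient.mk (x.val.2 ^ ee x.val))) ↔
        w ∈ (x.val.2).map π := by
    intro x w
    obtain ⟨z, rfl⟩ := Ideal.Quotient.mk_surjective w
    obtain ⟨h1, h2⟩ := hxmem x.val x.2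
    have he1 := hee1 x.val.1 h1 x.val.2 h2
    rw [hΨmk]
    show Ideal.Quotient.mk (x.val.2 ^ ee x.val) z ∈ _ ↔ _
    rw [Ideal.mem_quotient_iff_mem (Ideal.pow_le_self (Nat.one_le_iff_ne_zero.mp he1)), hπ,
      Ideal.mem_quotient_iff_mem (hINle x.val.1 h1 x.val.2 h2)]
  have step2 : Nat.card {w : Fin m → 𝓞 K ⧸ IN // Q w} =
      ∏ x ∈ s, Nat.card {v : Fin m → 𝓞 K ⧸ (x.2 ^ ee x) //
        ∃ j, v j ∉ (x.2).map (Ideal.Quotient.mk (x.2 ^ ee x))} := by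
    have E1 : {w : Fin m → 𝓞 K ⧸ IN // Q w} ≃
        {u : Fin m → (∀ x : ↥s, 𝓞 K ⧸ (x.val.2 ^ ee x.val)) //
          ∀ x : ↥s, ∃ j, u j x ∉ (x.val.2).map (Ideal.Quotient.mk (x.val.2 ^ ee x.val))} := by
      refine Equiv.subtypeEquiv (Equiv.piCongrRight (fun _j => Ψ.toEquiv)) ?_
      intro w
      constructor
      · intro h x
        obtain ⟨hx1, hx2⟩ := hxmem x.val x.2
        obtain ⟨j, hj⟩ := h x.val.1 hx1 x.val.2 hx2
        exact ⟨j, fun hc => hj ((hkey x (w j)).mp hc)⟩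
      · intro h p hp 𝔭 h𝔭
        obtain ⟨j, hj⟩ := h ⟨⟨p, 𝔭⟩, Finset.mem_sigma.mpr ⟨hp, h𝔭⟩⟩
        exact ⟨j, fun hc => hj ((hkey _ (w j)).mpr hc)⟩
    have E2 : {u : Fin m → (∀ x : ↥s, 𝓞 K ⧸ (x.val.2 ^ ee x.val)) //
          ∀ x : ↥s, ∃ j, u j x ∉ (x.val.2).map (Ideal.Quotient.mk (x.val.2 ^ ee x.val))} ≃
        ∀ x : ↥s, {v : Fin m → 𝓞 K ⧸ (x.val.2 ^ ee x.val) //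
          ∃ j, v j ∉ (x.val.2).map (Ideal.Quotient.mk (x.val.2 ^ ee x.val))} :=
      ((Equiv.subtypeEquiv
          (Equiv.piComm (fun (_ : Fin m) (x : ↥s) => 𝓞 K ⧸ (x.val.2 ^ ee x.val)))
          (q := fun u' => ∀ x : ↥s, ∃ j,
            u' x j ∉ (x.val.2).map (Ideal.Quotient.mk (x.val.2 ^ ee x.val)))
          (fun u => Iff.rfl))).trans (Equiv.subtypePiEquivPi
        (p := fun (x : ↥s) (v : Fin m → 𝓞 K ⧸ (x.val.2 ^ ee x.val)) => ∃ j,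
          v j ∉ (x.val.2).map (Ideal.Quotient.mk (x.val.2 ^ ee x.val))))
    rw [Nat.card_congr (E1.trans E2), Nat.card_pi]
    exact Finset.prod_coe_sort s (fun x => Nat.card {v : Fin m → 𝓞 K ⧸ (x.2 ^ ee x) //
      ∃ j, v j ∉ (x.2).map (Ideal.Quotient.mk (x.2 ^ ee x))})
  -- Step 3 : local counts
  have step3 : ∀ p ∈ S, ∀ 𝔭 ∈ P p,
      Nat.card {v : Fin m → 𝓞 K ⧸ (𝔭 ^ ee ⟨p,𝔭⟩) //
        ∃ j, v j ∉ 𝔭.map (Ideal.Quotient.mk (𝔭 ^ ee ⟨p,𝔭⟩))} =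
      p ^ (d 𝔭 * ee ⟨p,𝔭⟩ * m) - p ^ (d 𝔭 * (ee ⟨p,𝔭⟩ - 1) * m) := by
    intro p hp 𝔭 h𝔭
    exact aux_local_count m p (hS p hp) 𝔭 (hPfacts p hp 𝔭 h𝔭).2 (d 𝔭) (ee ⟨p,𝔭⟩)
      (hee1 p hp 𝔭 h𝔭) (hd p hp 𝔭 h𝔭)
  -- Step 4 : per-prime arithmetic
  have key_p : ∀ p ∈ S,
      ∏ 𝔭 ∈ P p, (p ^ (d 𝔭 * ee ⟨p,𝔭⟩ * m) - p ^ (d 𝔭 * (ee ⟨p,𝔭⟩ - 1) * m))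
      = p ^ (n*m - m * D p) * ∏ 𝔭 ∈ P p, (p ^ (d 𝔭 * m) - 1) := by
    intro p hp
    have hsum : ∑ 𝔭 ∈ P p, d 𝔭 * ee ⟨p,𝔭⟩ = n :=
      aux_sum_de_eq_n E p (hS p hp) (P p) d (hd p hp) (hfactor p hp)
    have hterm : ∀ 𝔭 ∈ P p, p ^ (d 𝔭 * ee ⟨p,𝔭⟩ * m) - p ^ (d 𝔭 * (ee ⟨p,𝔭⟩ - 1) * m)
        = p ^ (d 𝔭 * (ee ⟨p,𝔭⟩ - 1) * m) * (p ^ (d 𝔭 * m) - 1) := by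
      intro 𝔭 h𝔭
      obtain ⟨t, ht⟩ := Nat.exists_eq_add_of_le (hee1 p hp 𝔭 h𝔭)
      rw [ht]
      have hE2 : (1 + t) - 1 = t := Nat.add_sub_cancel_left 1 t
      have hE : d 𝔭 * (1 + t) * m = d 𝔭 * t * m + d 𝔭 * m := by ring
      rw [hE2]
      calc p ^ (d 𝔭 * (1+t) * m) - p ^ (d 𝔭 * t * m)
          = p ^ (d 𝔭 * t * m) * p ^ (d 𝔭 * m) - p ^ (d 𝔭 * t * m) * 1 := by
            rw [← pow_add, ← hE, mul_one]
        _ = p ^ (d 𝔭 * t * m) * (p ^ (d 𝔭 * m) - 1) := (Nat.mul_sub _ _ _).symm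
    rw [Finset.prod_congr rfl hterm, Finset.prod_mul_distrib,
      Finset.prod_pow_eq_pow_sum (P p)]
    have hA : (∑ 𝔭 ∈ P p, d 𝔭 * (ee ⟨p,𝔭⟩ - 1)) + D p = n := by
      rw [hD p hp, ← Finset.sum_add_distrib, ← hsum]
      apply Finset.sum_congr rfl
      intro 𝔭 h𝔭
      obtain ⟨t, ht⟩ := Nat.exists_eq_add_of_le (hee1 p hp 𝔭 h𝔭)
      rw [ht]
      have h3 : (1 + t) - 1 = t := Nat.add_sub_cancel_left 1 t
      rw [h3]; ring
    congr 2
    rw [← Finset.sum_mul, ← hA, add_mul, mul_comm m (D p), Nat.add_sub_cancel]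
  -- final assembly
  rw [step0, step1, step2, hs, Finset.prod_sigma]
  rw [← pow_mul]
  congr 1
  · rw [Nat.mul_comm n m]
  apply Finset.prod_congr rfl
  intro p hp
  rw [Finset.prod_congr rfl (fun 𝔭 h𝔭 => step3 p hp 𝔭 h𝔭), key_p p hp]
end

section
/- Let O be the ring of integers of a number field K of degree n, embedded into R^n via the canonical (Minkowski) embedding τ, and let I be a nonzero ideal of O. Then the first successive minimum of the lattice τ(I) ⊆ R^n is at least N(I)^{1/n}, where N(I) is the absolute norm of I. -/
set_option maxHeartbeats 1000000

open NumberField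

/-- The Euclidean norm of the Minkowski embedding of a nonzero element of an ideal `I`
(one coordinate for each real place, one `ℝ²`-block, i.e. one `|σ(x)|²` contribution,
for each conjugate pair of complex embeddings) is at least `N(I)^(1/n)`. -/
theorem minkowski_embedding_first_minimum
    (K : Type*) [Field K] [NumberField K] (n : ℕ) (hn : Module.finrank ℚ K = n)
    (I : Ideal (𝓞 K)) (hI : I ≠ ⊥) :
    ∀ x ∈ I, x ≠ 0 →
      (Ideal.absNorm I : ℝ) ^ ((n : ℝ)⁻¹) ≤
        Real.sqrt (∑ w : InfinitePlace K, (w (algebraMap (𝓞 K) K x)) ^ 2) := by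
  intro x hx hx0
  set S := Real.sqrt (∑ w : InfinitePlace K, (w (algebraMap (𝓞 K) K x)) ^ 2) with hS
  have hS0 : 0 ≤ S := Real.sqrt_nonneg _
  have hn0 : n ≠ 0 := by
    rintro rfl
    exact absurd hn (by have := Module.finrank_pos (R := ℚ) (M := K); omega)
  -- each place value is ≤ S
  have hle : ∀ w : InfinitePlace K, w (algebraMap (𝓞 K) K x) ≤ S := by
    intro w
    have h1 : (w (algebraMap (𝓞 K) K x)) ^ 2 ≤ ∑ w : InfinitePlace K,
        (w (algebraMap (𝓞 K) K x)) ^ 2 :=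
      Finset.single_le_sum (f := fun w : InfinitePlace K =>
        (w (algebraMap (𝓞 K) K x)) ^ 2) (fun _ _ => sq_nonneg _) (Finset.mem_univ w)
    calc w (algebraMap (𝓞 K) K x) = Real.sqrt ((w (algebraMap (𝓞 K) K x)) ^ 2) := by
          exact (Real.sqrt_sq (AbsoluteValue.nonneg _ _)).symm
      _ ≤ S := Real.sqrt_le_sqrt h1
  -- N(I) ≤ |N(x)|
  have hdvd : (Ideal.absNorm I : ℤ) ∣ Algebra.norm ℤ x :=
    Ideal.absNorm_dvd_norm_of_mem hx
  have hnx0 : Algebra.norm ℤ x ≠ 0 := by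
    simpa [Algebra.norm_eq_zero_iff] using hx0
  have hNI : (Ideal.absNorm I : ℤ) ≤ |Algebra.norm ℤ x| :=
    Int.le_of_dvd (abs_pos.mpr hnx0) ((dvd_abs _ _).mpr hdvd)
  -- |N(x)| = ∏ w(x)^mult w ≤ S^n
  have hprod : |(Algebra.norm ℚ (algebraMap (𝓞 K) K x))| =
      ∏ w : InfinitePlace K, w (algebraMap (𝓞 K) K x) ^ w.mult :=
    (InfinitePlace.prod_eq_abs_norm _).symm
  have hprodle : ∏ w : InfinitePlace K, w (algebraMap (𝓞 K) K x) ^ w.mult ≤ S ^ n := by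
    calc ∏ w : InfinitePlace K, w (algebraMap (𝓞 K) K x) ^ w.mult
        ≤ ∏ w : InfinitePlace K, S ^ w.mult := by
          refine Finset.prod_le_prod (fun w _ => pow_nonneg (AbsoluteValue.nonneg _ _) _)
            (fun w _ => pow_le_pow_left₀ (AbsoluteValue.nonneg _ _) (hle w) _)
      _ = S ^ (∑ w : InfinitePlace K, w.mult) := by rw [Finset.prod_pow_eq_pow_sum]
      _ = S ^ n := by rw [InfinitePlace.sum_mult_eq, hn]
  have key : (Ideal.absNorm I : ℝ) ≤ S ^ n := by
    have h1 : (Ideal.absNorm I : ℝ) ≤ |(Algebra.norm ℚ (algebraMap (𝓞 K) K x))| := by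
      have : ((Ideal.absNorm I : ℤ) : ℝ) ≤ (|Algebra.norm ℤ x| : ℤ) := by exact_mod_cast hNI
      rw [← Algebra.coe_norm_int] at *
      push_cast at this ⊢
      simpa using this
    linarith [hprod ▸ h1]
  calc (Ideal.absNorm I : ℝ) ^ ((n : ℝ)⁻¹) ≤ (S ^ n) ^ ((n : ℝ)⁻¹) :=
        Real.rpow_le_rpow (by positivity) key (by positivity)
    _ = S := by
        rw [← Real.rpow_natCast S n, ← Real.rpow_mul hS0,
          mul_inv_cancel₀ (by exact_mod_cast hn0), Real.rpow_one]
end
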